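/- Necessary condition on the polymerization rate for a bimodal equilibrium distribution. Let V∞ > 0, β₀ > 0, μ₀ ∈ ℝ, and let τ, u : (0,∞) → ℝ be twice differentiable with u ≥ 0, satisfying the equilibrium equation V∞·(τ·u)''(x) + ((μ₀ + β₀x)·u(x))' + 2β₀·u(x) = 0 for all x > 0. Suppose there exists x* > 0 with τ(x*) > 0, u(x*) > 0, u'(x*) = 0 and u''(x*) > 0 (i.e. u has a strict interior local-minimum-type critical point, as a bimodal distribution must have). Then V∞·τ''(x*) < −3β₀; in particular inf_{x>0} V∞·τ''(x) < −3β₀. -/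

import Mathlib

/-- **Necessary condition on the polymerization rate for a bimodal equilibrium
distribution**: if `u ≥ 0` solves the equilibrium ODE
`V∞ (τ u)'' + ((μ₀ + β₀ x) u)' + 2 β₀ u = 0` on `(0,∞)` and has a strict interior
local-minimum-type critical point `x*` (with `τ(x*) > 0`, `u(x*) > 0`, `u'(x*) = 0`,
`u''(x*) > 0`), then `V∞ τ''(x*) < −3 β₀`; in particular
`inf_{x>0} V∞ τ''(x) < −3 β₀`. -/
theorem bimodal_necessary_condition
    (Vinf beta0 mu0 : ℝ) (hVinf : 0 < Vinf) (hbeta0 : 0 < beta0)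
    (tau u : ℝ → ℝ)
    (htau_d1 : ∀ x > 0, DifferentiableAt ℝ tau x)
    (htau_d2 : ∀ x > 0, DifferentiableAt ℝ (deriv tau) x)
    (hu_d1 : ∀ x > 0, DifferentiableAt ℝ u x)
    (hu_d2 : ∀ x > 0, DifferentiableAt ℝ (deriv u) x)
    (hu_nn : ∀ x > 0, 0 ≤ u x)
    (hode : ∀ x > 0,
      Vinf * deriv (deriv (fun y => tau y * u y)) x
        + deriv (fun y => (mu0 + beta0 * y) * u y) x + 2 * beta0 * u x = 0)
    (xs : ℝ) (hxs : 0 < xs)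
    (htaupos : 0 < tau xs) (hupos : 0 < u xs)
    (hcrit : deriv u xs = 0) (hconvex : 0 < deriv (deriv u) xs) :
    Vinf * deriv (deriv tau) xs < -3 * beta0 ∧
    ∃ x > 0, Vinf * deriv (deriv tau) x < -3 * beta0 := by
  -- first derivative of τ·u near xs
  have h1 : (deriv (fun y => tau y * u y)) =ᶠ[nhds xs]
      (fun y => deriv tau y * u y + tau y * deriv u y) := by
    filter_upwards [eventually_gt_nhds hxs] with x hx
    exact deriv_mul (htau_d1 x hx) (hu_d1 x hx)
  -- second derivative of τ·u at xs
  have h2 : deriv (deriv (fun y => tau y * u y)) xs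
      = deriv (deriv tau) xs * u xs + deriv tau xs * deriv u xs
        + (deriv tau xs * deriv u xs + tau xs * deriv (deriv u) xs) := by
    rw [Filter.EventuallyEq.deriv_eq h1,
      deriv_fun_add ((htau_d2 xs hxs).fun_mul (hu_d1 xs hxs))
        ((htau_d1 xs hxs).fun_mul (hu_d2 xs hxs)),
      deriv_fun_mul (htau_d2 xs hxs) (hu_d1 xs hxs),
      deriv_fun_mul (htau_d1 xs hxs) (hu_d2 xs hxs)]
  -- derivative of (μ₀+β₀x)u at xs
  have h3 : deriv (fun y => (mu0 + beta0 * y) * u y) xs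
      = beta0 * u xs + (mu0 + beta0 * xs) * deriv u xs := by
    have hd : DifferentiableAt ℝ (fun y : ℝ => mu0 + beta0 * y) xs := by
      fun_prop
    rw [deriv_fun_mul hd (hu_d1 xs hxs)]
    have : deriv (fun y : ℝ => mu0 + beta0 * y) xs = beta0 := by
      simpa using (((hasDerivAt_id xs).const_mul beta0).const_add mu0).deriv
    rw [this]
  have heq := hode xs hxs
  rw [h2, h3, hcrit] at heq
  have hkey : Vinf * deriv (deriv tau) xs < -3 * beta0 := by
    have h4 : 0 < Vinf * tau xs * deriv (deriv u) xs :=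
      mul_pos (mul_pos hVinf htaupos) hconvex
    nlinarith [mul_pos hupos (mul_pos hVinf htaupos)]
  exact ⟨hkey, xs, hxs, hkey⟩
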